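/- arXiv:1707.02269 — 2 statements merged into one kernel-verified Lean document; each statement's English description precedes it below -/
import Mathlib

section
/- For d ≥ 3 and ν = (d-2)/2, the function f(x) = x·K_{ν+1}(x)/K_ν(x) on (0,∞) is strictly increasing, where K_μ denotes the modified Bessel function of the second kind. -/
open MeasureTheory Real Set Filter
open scoped Topology

noncomputable section

/-- The modified Bessel function of the second kind (Macdonald function), via the standard
integral representation `K_ν(x) = ∫_0^∞ exp(-x cosh t) cosh(ν t) dt` (for `x > 0`). -/
def besselK (ν x : ℝ) : ℝ :=
  ∫ t in Ioi (0 : ℝ), Real.exp (-x * Real.cosh t) * Real.cosh (ν * t)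

namespace BesselAux

lemma abs_sinh_le_cosh (y : ℝ) : |Real.sinh y| ≤ Real.cosh y := by
  rw [Real.sinh_eq, Real.cosh_eq, abs_le]
  constructor <;> nlinarith [Real.exp_pos y, Real.exp_pos (-y)]

lemma cosh_le_exp_abs (y : ℝ) : Real.cosh y ≤ Real.exp |y| := by
  rw [Real.cosh_eq]
  have h1 : Real.exp y ≤ Real.exp |y| := Real.exp_le_exp.2 (le_abs_self y)
  have h2 : Real.exp (-y) ≤ Real.exp |y| := Real.exp_le_exp.2 (neg_le_abs y)
  linarith

lemma one_add_sq_le_cosh {t : ℝ} (ht : 0 ≤ t) : 1 + t ^ 2 / 2 ≤ Real.cosh t := by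
  have h1 : Real.cosh (2 * (t / 2)) = Real.cosh (t / 2) ^ 2 + Real.sinh (t / 2) ^ 2 :=
    Real.cosh_two_mul _
  have h2 : Real.cosh (t / 2) ^ 2 = Real.sinh (t / 2) ^ 2 + 1 := Real.cosh_sq _
  have h3 : t / 2 ≤ Real.sinh (t / 2) := by
    rcases eq_or_lt_of_le (by linarith : (0:ℝ) ≤ t / 2) with h | h
    · simp [← h]
    · exact (Real.self_lt_sinh_iff.2 h).le
  have h4 : (2 : ℝ) * (t / 2) = t := by ring
  rw [h4] at h1
  nlinarith

lemma cosh_mul_cosh' (c t : ℝ) :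
    Real.cosh (c * t) * Real.cosh t
      = (Real.cosh ((c + 1) * t) + Real.cosh ((c - 1) * t)) / 2 := by
  rw [show (c + 1) * t = c * t + t by ring, show (c - 1) * t = c * t - t by ring,
    Real.cosh_add, Real.cosh_sub]
  ring

lemma cosh_sub_cosh' (c t : ℝ) :
    Real.cosh ((c + 1) * t) - Real.cosh ((c - 1) * t)
      = 2 * Real.sinh (c * t) * Real.sinh t := by
  rw [show (c + 1) * t = c * t + t by ring, show (c - 1) * t = c * t - t by ring,
    Real.cosh_add, Real.cosh_sub]
  ring

lemma kernel_identity (c s t : ℝ) :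
    Real.cosh ((c - 1) * s) * Real.cosh ((c + 1) * t)
      + Real.cosh ((c + 1) * s) * Real.cosh ((c - 1) * t)
      - 2 * (Real.cosh (c * s) * Real.cosh (c * t))
    = Real.cosh (c * (s + t)) * (Real.cosh (s - t) - 1)
      + Real.cosh (c * (s - t)) * (Real.cosh (s + t) - 1) := by
  rw [show (c - 1) * s = c * s - s by ring, show (c + 1) * t = c * t + t by ring,
    show (c + 1) * s = c * s + s by ring, show (c - 1) * t = c * t - t by ring,
    show c * (s + t) = c * s + c * t by ring, show c * (s - t) = c * s - c * t by ring,
    Real.cosh_add, Real.cosh_sub, Real.cosh_add, Real.cosh_sub, Real.cosh_add, Real.cosh_sub,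
    Real.cosh_add, Real.cosh_sub]
  ring

lemma integrableOn_aux {x : ℝ} (hx : 0 < x) (c : ℝ) :
    IntegrableOn (fun t => Real.exp (-x * Real.cosh t) * Real.cosh (c * t)) (Ioi 0) := by
  have hcont : Continuous fun t => Real.exp (-x * Real.cosh t) * Real.cosh (c * t) := by
    fun_prop
  obtain ⟨a, ha⟩ : ∃ a : ℝ, a = |c| + 1 := ⟨_, rfl⟩
  have ha0 : 0 ≤ a := by rw [ha]; positivity
  refine Integrable.mono' (((exp_neg_integrableOn_Ioi 0 one_pos)).const_mul
    (Real.exp (a ^ 2 / (2 * x) - x))) hcont.aestronglyMeasurable ?_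
  filter_upwards [ae_restrict_mem measurableSet_Ioi] with t ht
  have ht0 : (0 : ℝ) < t := ht
  have hc1 : Real.cosh (c * t) ≤ Real.exp (|c| * t) := by
    refine (cosh_le_exp_abs _).trans (Real.exp_le_exp.2 ?_)
    rw [abs_mul, abs_of_pos ht0]
  have hcosh := one_add_sq_le_cosh ht0.le
  have hkey : -x * Real.cosh t + |c| * t ≤ a ^ 2 / (2 * x) - x - t := by
    have h5 : a * t - x * t ^ 2 / 2 ≤ a ^ 2 / (2 * x) := by
      rw [le_div_iff₀ (by positivity : (0:ℝ) < 2 * x)]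
      nlinarith [sq_nonneg (x * t - a)]
    have h6 : |c| * t = a * t - t := by rw [ha]; ring
    nlinarith
  have hnorm : ‖Real.exp (-x * Real.cosh t) * Real.cosh (c * t)‖
      = Real.exp (-x * Real.cosh t) * Real.cosh (c * t) := by
    rw [Real.norm_eq_abs, abs_of_pos (by positivity)]
  rw [hnorm]
  calc Real.exp (-x * Real.cosh t) * Real.cosh (c * t)
      ≤ Real.exp (-x * Real.cosh t) * Real.exp (|c| * t) := by
        exact mul_le_mul_of_nonneg_left hc1 (Real.exp_pos _).le
    _ = Real.exp (-x * Real.cosh t + |c| * t) := by rw [← Real.exp_add]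
    _ ≤ Real.exp (a ^ 2 / (2 * x) - x - t) := Real.exp_le_exp.2 hkey
    _ = Real.exp (a ^ 2 / (2 * x) - x) * Real.exp (-1 * t) := by
        rw [← Real.exp_add]; ring_nf

lemma besselK_pos {x : ℝ} (hx : 0 < x) (c : ℝ) : 0 < besselK c x := by
  rw [besselK]
  refine (setIntegral_pos_iff_support_of_nonneg_ae ?_ (integrableOn_aux hx c)).2 ?_
  · filter_upwards with t
    positivity
  · have hs : (Function.support fun t => Real.exp (-x * Real.cosh t) * Real.cosh (c * t))
        = univ := by
      ext t; simp only [Function.mem_support, mem_univ, iff_true]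
      positivity
    rw [hs, univ_inter, Real.volume_Ioi]
    simp

lemma hasDerivAt_besselK {x : ℝ} (hx : 0 < x) (c : ℝ) :
    HasDerivAt (fun y => besselK c y)
      (-((besselK (c + 1) x + besselK (c - 1) x) / 2)) x := by
  have hx2 : 0 < x / 2 := half_pos hx
  have hsplit : ∀ z t : ℝ, Real.cosh t * (Real.exp (-z * Real.cosh t) * Real.cosh (c * t))
      = (Real.exp (-z * Real.cosh t) * Real.cosh ((c + 1) * t)
          + Real.exp (-z * Real.cosh t) * Real.cosh ((c - 1) * t)) / 2 := fun z t => by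
    linear_combination Real.exp (-z * Real.cosh t) * cosh_mul_cosh' c t
  have hb : IntegrableOn
      (fun t => Real.cosh t * (Real.exp (-(x / 2) * Real.cosh t) * Real.cosh (c * t)))
      (Ioi 0) := by
    have heq : (fun t => Real.cosh t * (Real.exp (-(x / 2) * Real.cosh t) * Real.cosh (c * t)))
        = fun t => (Real.exp (-(x / 2) * Real.cosh t) * Real.cosh ((c + 1) * t)
            + Real.exp (-(x / 2) * Real.cosh t) * Real.cosh ((c - 1) * t)) / 2 :=
      funext fun t => hsplit _ t
    rw [heq]
    exact ((integrableOn_aux hx2 (c + 1)).add (integrableOn_aux hx2 (c - 1))).div_const 2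
  have key := hasDerivAt_integral_of_dominated_loc_of_deriv_le
      (μ := volume.restrict (Ioi 0)) (x₀ := x)
      (F := fun y t => Real.exp (-y * Real.cosh t) * Real.cosh (c * t))
      (F' := fun y t => -(Real.cosh t * (Real.exp (-y * Real.cosh t) * Real.cosh (c * t))))
      (bound := fun t => Real.cosh t * (Real.exp (-(x / 2) * Real.cosh t) * Real.cosh (c * t)))
      (Metric.ball_mem_nhds x hx2) (Eventually.of_forall fun y => Continuous.aestronglyMeasurable (by fun_prop))
      (integrableOn_aux hx c) (Continuous.aestronglyMeasurable (by fun_prop)) ?_ hb ?_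
  · have hval : (∫ t in Ioi (0 : ℝ),
        -(Real.cosh t * (Real.exp (-x * Real.cosh t) * Real.cosh (c * t))))
        = -((besselK (c + 1) x + besselK (c - 1) x) / 2) := by
      rw [integral_neg, besselK, besselK]
      congr 1
      simp only [hsplit]
      rw [integral_div, integral_add (integrableOn_aux hx (c + 1)) (integrableOn_aux hx (c - 1))]
    simp only [besselK]
    exact hval ▸ key.2
  · filter_upwards [ae_restrict_mem measurableSet_Ioi] with t ht
    intro y hy
    have hy2 : x / 2 ≤ y := by
      have := abs_lt.1 (by simpa [Real.dist_eq] using Metric.mem_ball.1 hy)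
      linarith [this.1]
    rw [norm_neg, Real.norm_eq_abs, abs_of_nonneg (by positivity)]
    have hexp : Real.exp (-y * Real.cosh t) ≤ Real.exp (-(x / 2) * Real.cosh t) :=
      Real.exp_le_exp.2 (by nlinarith [Real.cosh_pos t])
    have h1 : (0:ℝ) < Real.cosh (c * t) := Real.cosh_pos _
    have h2 : (0:ℝ) < Real.cosh t := Real.cosh_pos _
    exact mul_le_mul_of_nonneg_left
      (mul_le_mul_of_nonneg_right hexp h1.le) h2.le
  · refine Eventually.of_forall fun t y hy => ?_
    have h0 : HasDerivAt (fun y : ℝ => -y * Real.cosh t) (-Real.cosh t) y := by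
      simpa using (hasDerivAt_id y).neg.mul_const (Real.cosh t)
    have h1 := (h0.exp).mul_const (Real.cosh (c * t))
    refine h1.congr_deriv ?_
    ring

lemma besselK_recurrence {x : ℝ} (hx : 0 < x) (c : ℝ) :
    besselK (c + 1) x - besselK (c - 1) x = 2 * c / x * besselK c x := by
  have hu : ∀ t ∈ Ioi (0:ℝ), HasDerivAt (fun t => Real.sinh (c * t))
      (c * Real.cosh (c * t)) t := by
    intro t _
    have h0 : HasDerivAt (fun y : ℝ => c * y) c t := by
      simpa using (hasDerivAt_id t).const_mul c
    have h := h0.sinh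
    convert h using 1
    ring
  have hv : ∀ t ∈ Ioi (0:ℝ), HasDerivAt (fun t => -2 / x * Real.exp (-x * Real.cosh t))
      (2 * Real.sinh t * Real.exp (-x * Real.cosh t)) t := by
    intro t _
    have h1 : HasDerivAt (fun t : ℝ => -x * Real.cosh t) (-x * Real.sinh t) t :=
      (Real.hasDerivAt_cosh t).const_mul (-x)
    have h2 := (h1.exp).const_mul (-2 / x)
    refine h2.congr_deriv ?_
    field_simp
  have huv' : IntegrableOn ((fun t => Real.sinh (c * t)) * fun t =>
      2 * Real.sinh t * Real.exp (-x * Real.cosh t)) (Ioi 0) := by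
    have heq : ((fun t => Real.sinh (c * t)) * fun t =>
        2 * Real.sinh t * Real.exp (-x * Real.cosh t))
        = fun t => Real.exp (-x * Real.cosh t) * Real.cosh ((c + 1) * t)
            - Real.exp (-x * Real.cosh t) * Real.cosh ((c - 1) * t) := by
      funext t
      simp only [Pi.mul_apply]
      linear_combination -Real.exp (-x * Real.cosh t) * cosh_sub_cosh' c t
    rw [heq]
    exact (integrableOn_aux hx (c + 1)).sub (integrableOn_aux hx (c - 1))
  have hu'v : IntegrableOn ((fun t => c * Real.cosh (c * t)) * fun t =>
      -2 / x * Real.exp (-x * Real.cosh t)) (Ioi 0) := by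
    have heq : ((fun t => c * Real.cosh (c * t)) * fun t =>
        -2 / x * Real.exp (-x * Real.cosh t))
        = fun t => (c * (-2 / x)) * (Real.exp (-x * Real.cosh t) * Real.cosh (c * t)) := by
      funext t; simp only [Pi.mul_apply]; ring
    rw [heq]
    exact (integrableOn_aux hx c).const_mul _
  have h_zero : Tendsto ((fun t => Real.sinh (c * t)) * fun t =>
      -2 / x * Real.exp (-x * Real.cosh t)) (𝓝[>] (0:ℝ)) (𝓝 0) := by
    show Tendsto (fun t => Real.sinh (c * t) * (-2 / x * Real.exp (-x * Real.cosh t)))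
      (𝓝[>] (0:ℝ)) (𝓝 0)
    have hcont : Continuous (fun t =>
        Real.sinh (c * t) * (-2 / x * Real.exp (-x * Real.cosh t))) := by fun_prop
    have h := (hcont.tendsto 0).mono_left (nhdsWithin_le_nhds (s := Ioi (0:ℝ)))
    simpa using h
  have h_infty : Tendsto ((fun t => Real.sinh (c * t)) * fun t =>
      -2 / x * Real.exp (-x * Real.cosh t)) atTop (𝓝 0) := by
    show Tendsto (fun t => Real.sinh (c * t) * (-2 / x * Real.exp (-x * Real.cosh t)))
      atTop (𝓝 0)
    apply squeeze_zero_norm'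
      (a := fun t => 2 / x * Real.exp (-x * Real.cosh t + |c| * t))
    · filter_upwards [eventually_ge_atTop (0:ℝ)] with t ht
      have e1 : ‖Real.sinh (c * t) * (-2 / x * Real.exp (-x * Real.cosh t))‖
          = |Real.sinh (c * t)| * (2 / x * Real.exp (-x * Real.cosh t)) := by
        rw [Real.norm_eq_abs, abs_mul, abs_mul, abs_div, abs_neg,
          abs_of_pos hx, abs_of_pos (Real.exp_pos _)]
        norm_num
      rw [e1]
      have h2 : |Real.sinh (c * t)| ≤ Real.exp (|c| * t) := by
        refine (abs_sinh_le_cosh _).trans ((cosh_le_exp_abs _).trans (Real.exp_le_exp.2 ?_))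
        rw [abs_mul, abs_of_nonneg ht]
      calc |Real.sinh (c * t)| * (2 / x * Real.exp (-x * Real.cosh t))
          ≤ Real.exp (|c| * t) * (2 / x * Real.exp (-x * Real.cosh t)) := by
            have : (0:ℝ) ≤ 2 / x * Real.exp (-x * Real.cosh t) := by positivity
            exact mul_le_mul_of_nonneg_right h2 this
        _ = 2 / x * Real.exp (-x * Real.cosh t + |c| * t) := by
            rw [Real.exp_add]; ring
    · have h3 : Tendsto (fun t : ℝ => -x * Real.cosh t + |c| * t) atTop atBot := by
        apply tendsto_atBot_mono' atTop (f₁ := fun t : ℝ => -t)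
        · filter_upwards [eventually_ge_atTop (max 0 (2 * (|c| + 1) / x))] with t ht
          have ht0 : (0:ℝ) ≤ t := le_trans (le_max_left _ _) ht
          have ht1 : 2 * (|c| + 1) / x ≤ t := le_trans (le_max_right _ _) ht
          have h7 : 2 * (|c| + 1) ≤ t * x := (div_le_iff₀ hx).1 ht1
          have h8 := one_add_sq_le_cosh ht0
          nlinarith [mul_le_mul_of_nonneg_left h7 ht0, abs_nonneg c,
            mul_le_mul_of_nonneg_left h8 hx.le]
        · exact tendsto_neg_atTop_atBot
      have h4 := Real.tendsto_exp_atBot.comp h3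
      simpa using h4.const_mul (2 / x)
  have key := integral_Ioi_mul_deriv_eq_deriv_mul hu hv huv' hu'v h_zero h_infty
  have e1 : (∫ t in Ioi (0:ℝ),
      Real.sinh (c * t) * (2 * Real.sinh t * Real.exp (-x * Real.cosh t)))
      = besselK (c + 1) x - besselK (c - 1) x := by
    rw [besselK, besselK, ← integral_sub (integrableOn_aux hx (c + 1))
      (integrableOn_aux hx (c - 1))]
    exact integral_congr_ae (Eventually.of_forall fun t => by
      linear_combination -Real.exp (-x * Real.cosh t) * cosh_sub_cosh' c t)
  have e2 : (∫ t in Ioi (0:ℝ),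
      c * Real.cosh (c * t) * (-2 / x * Real.exp (-x * Real.cosh t)))
      = c * (-2 / x) * besselK c x := by
    rw [besselK, ← integral_const_mul]
    exact integral_congr_ae (Eventually.of_forall fun t => by ring)
  rw [e1, e2] at key
  rw [key]
  ring

lemma besselK_turan {x : ℝ} (hx : 0 < x) (c : ℝ) :
    besselK c x ^ 2 < besselK (c - 1) x * besselK (c + 1) x := by
  set fm : ℝ → ℝ := fun t => Real.exp (-x * Real.cosh t) * Real.cosh ((c - 1) * t) with hfm
  set fp : ℝ → ℝ := fun t => Real.exp (-x * Real.cosh t) * Real.cosh ((c + 1) * t) with hfp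
  set f0 : ℝ → ℝ := fun t => Real.exp (-x * Real.cosh t) * Real.cosh (c * t) with hf0
  have hm : Integrable fm (volume.restrict (Ioi 0)) := integrableOn_aux hx (c - 1)
  have hp : Integrable fp (volume.restrict (Ioi 0)) := integrableOn_aux hx (c + 1)
  have h0 : Integrable f0 (volume.restrict (Ioi 0)) := integrableOn_aux hx c
  have hP1 := hm.mul_prod hp
  have hP2 := hp.mul_prod hm
  have hP0 := h0.mul_prod h0
  have hKm : ∫ t, fm t ∂(volume.restrict (Ioi 0)) = besselK (c - 1) x := by
    rw [hfm, besselK]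
  have hKp : ∫ t, fp t ∂(volume.restrict (Ioi 0)) = besselK (c + 1) x := by
    rw [hfp, besselK]
  have hK0 : ∫ t, f0 t ∂(volume.restrict (Ioi 0)) = besselK c x := by
    rw [hf0, besselK]
  have hD1 : (∫ z : ℝ × ℝ, (fm z.1 * fp z.2 - f0 z.1 * f0 z.2)
      ∂((volume.restrict (Ioi 0)).prod (volume.restrict (Ioi 0))))
      = besselK (c - 1) x * besselK (c + 1) x - besselK c x ^ 2 := by
    rw [integral_sub hP1 hP0, integral_prod_mul, integral_prod_mul, hKm, hKp, hK0]
    ring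
  have hD2 : (∫ z : ℝ × ℝ, (fp z.1 * fm z.2 - f0 z.1 * f0 z.2)
      ∂((volume.restrict (Ioi 0)).prod (volume.restrict (Ioi 0))))
      = besselK (c - 1) x * besselK (c + 1) x - besselK c x ^ 2 := by
    rw [integral_sub hP2 hP0, integral_prod_mul, integral_prod_mul, hKm, hKp, hK0]
    ring
  have hpt : ∀ z : ℝ × ℝ, 0 < z.1 → 0 < z.2 →
      0 < fm z.1 * fp z.2 - f0 z.1 * f0 z.2 + (fp z.1 * fm z.2 - f0 z.1 * f0 z.2) := by
    intro z hs ht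
    have expand : fm z.1 * fp z.2 - f0 z.1 * f0 z.2 + (fp z.1 * fm z.2 - f0 z.1 * f0 z.2)
        = Real.exp (-x * Real.cosh z.1) * Real.exp (-x * Real.cosh z.2)
          * (Real.cosh (c * (z.1 + z.2)) * (Real.cosh (z.1 - z.2) - 1)
            + Real.cosh (c * (z.1 - z.2)) * (Real.cosh (z.1 + z.2) - 1)) := by
      simp only [hfm, hfp, hf0]
      linear_combination Real.exp (-x * Real.cosh z.1) * Real.exp (-x * Real.cosh z.2)
        * kernel_identity c z.1 z.2
    rw [expand]
    have h1 : (0:ℝ) < Real.cosh (z.1 + z.2) - 1 :=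
      sub_pos.2 (Real.one_lt_cosh.2 (by positivity))
    have h2 : (0:ℝ) ≤ Real.cosh (z.1 - z.2) - 1 := sub_nonneg.2 (Real.one_le_cosh _)
    have h3 : (0:ℝ) < Real.cosh (c * (z.1 + z.2)) := Real.cosh_pos _
    have h4 : (0:ℝ) < Real.cosh (c * (z.1 - z.2)) := Real.cosh_pos _
    have h5 : (0:ℝ) < Real.exp (-x * Real.cosh z.1) * Real.exp (-x * Real.cosh z.2) := by
      positivity
    have h6 : (0:ℝ) < Real.cosh (c * (z.1 + z.2)) * (Real.cosh (z.1 - z.2) - 1)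
        + Real.cosh (c * (z.1 - z.2)) * (Real.cosh (z.1 + z.2) - 1) := by
      nlinarith [mul_nonneg h3.le h2, mul_pos h4 h1]
    exact mul_pos h5 h6
  have hsum : 0 < ∫ z : ℝ × ℝ, (fm z.1 * fp z.2 - f0 z.1 * f0 z.2
      + (fp z.1 * fm z.2 - f0 z.1 * f0 z.2))
      ∂((volume.restrict (Ioi 0)).prod (volume.restrict (Ioi 0))) := by
    have hMeq : (volume.restrict (Ioi (0:ℝ))).prod (volume.restrict (Ioi (0:ℝ)))
        = (volume.prod volume).restrict (Ioi 0 ×ˢ Ioi 0) := Measure.prod_restrict _ _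
    rw [hMeq]
    refine (setIntegral_pos_iff_support_of_nonneg_ae ?_ ?_).2 ?_
    · filter_upwards [ae_restrict_mem (measurableSet_Ioi.prod measurableSet_Ioi)] with z hz
      exact (hpt z hz.1 hz.2).le
    · have hint := (hP1.sub hP0).add (hP2.sub hP0)
      rwa [hMeq] at hint
    · refine lt_of_lt_of_le ?_ (measure_mono
        (fun z hz => ⟨(hpt z hz.1 hz.2).ne', hz⟩))
      rw [Measure.prod_prod, Real.volume_Ioi]
      simp
  have hadd := integral_add (hP1.sub hP0) (hP2.sub hP0)
  simp only [Pi.sub_apply] at hadd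
  rw [hadd, hD1, hD2] at hsum
  nlinarith [hsum]

lemma strictMono_ratio (c : ℝ) :
    StrictMonoOn (fun x : ℝ => x * besselK (c + 1) x / besselK c x) (Ioi (0 : ℝ)) := by
  refine strictMonoOn_of_deriv_pos (convex_Ioi 0) ?_ ?_
  · intro y hy
    have hy0 : (0:ℝ) < y := hy
    have hp := hasDerivAt_besselK hy0 (c + 1)
    have hnum := (hasDerivAt_id' y).mul hp
    have hder := hnum.div (hasDerivAt_besselK hy0 c) (besselK_pos hy0 c).ne'
    exact hder.continuousAt.continuousWithinAt
  · rw [interior_Ioi]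
    intro y hy
    have hy0 : (0:ℝ) < y := hy
    have hp := hasDerivAt_besselK hy0 (c + 1)
    rw [show c + 1 + 1 = c + 2 by ring, show c + 1 - 1 = c by ring] at hp
    have hnum := (hasDerivAt_id' y).mul hp
    have hder := hnum.div (hasDerivAt_besselK hy0 c) (besselK_pos hy0 c).ne'
    rw [show (fun x => x * besselK (c + 1) x / besselK c x)
      = ((fun x => x) * fun y => besselK (c + 1) y) / fun y => besselK c y from rfl, hder.deriv]
    have hA := besselK_recurrence hy0 (c + 1)
    rw [show c + 1 + 1 = c + 2 by ring, show c + 1 - 1 = c by ring] at hA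
    have hB := besselK_recurrence hy0 c
    have hT := besselK_turan hy0 c
    have hK0 := besselK_pos hy0 c
    have hKp := besselK_pos hy0 (c + 1)
    apply div_pos ?_ (pow_pos hK0 2)
    have hA' : y * (besselK (c + 2) y - besselK c y) = 2 * (c + 1) * besselK (c + 1) y := by
      rw [hA]
      field_simp
    have hB' : y * (besselK (c + 1) y - besselK (c - 1) y) = 2 * c * besselK c y := by
      rw [hB]
      field_simp
    have hNum : (1 * besselK (c + 1) y + y * -((besselK (c + 2) y + besselK c y) / 2))
          * besselK c y
        - y * besselK (c + 1) y * -((besselK (c + 1) y + besselK (c - 1) y) / 2)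
        = y * (besselK (c - 1) y * besselK (c + 1) y - besselK c y ^ 2) := by
      linear_combination (-(besselK c y) / 2) * hA' + (besselK (c + 1) y / 2) * hB'
    erw [hNum]
    exact mul_pos hy0 (by nlinarith [hT])

end BesselAux

/-- For `d ≥ 3` and `ν = (d-2)/2`, the function `f(x) = x K_{ν+1}(x)/K_ν(x)` is strictly
increasing on `(0, ∞)`. -/
theorem statement3 (d : ℕ) (hd : 3 ≤ d) :
    StrictMonoOn
      (fun x : ℝ => x * besselK (((d : ℝ) - 2) / 2 + 1) x / besselK (((d : ℝ) - 2) / 2) x)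
      (Ioi (0 : ℝ)) :=
  BesselAux.strictMono_ratio _
end
end

section
/- Let ν ≥ 1 and x > 0. Then K_{ν-1}(x)·K_{ν+1}(x) > K_ν(x)², where K_μ is the modified Bessel function of the second kind. -/
open MeasureTheory Real Set Filter

noncomputable section

lemma cosh_prod_identity (ν t : ℝ) :
    Real.cosh ((ν-1)*t) * Real.cosh ((ν+1)*t) = Real.cosh (ν*t)^2 + Real.sinh t^2 := by
  have e1 : (ν+1)*t = ν*t + t := by ring
  have e2 : (ν-1)*t = ν*t - t := by ring
  rw [e1, e2, Real.cosh_add, Real.cosh_sub]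
  have q1 := Real.cosh_sq_sub_sinh_sq (ν*t)
  have q2 := Real.cosh_sq_sub_sinh_sq t
  nlinarith [q1, q2]

lemma besselK_integrand_integrable (μ : ℝ) {x : ℝ} (hx : 0 < x) :
    IntegrableOn (fun t => Real.exp (-x * Real.cosh t) * Real.cosh (μ * t)) (Ioi 0) := by
  apply integrable_of_isBigO_exp_neg (a := 0) (b := 1) one_pos
  · exact (Continuous.mul (by fun_prop) (by fun_prop)).continuousOn
  · rw [Asymptotics.isBigO_iff]
    refine ⟨1, ?_⟩
    have hlin : ∀ᶠ t in atTop, (|μ|+1)*t ≤ x/2 * Real.exp t := by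
      have h := (Real.tendsto_exp_div_pow_atTop 1).eventually_ge_atTop (2*(|μ|+1)/x)
      filter_upwards [h, eventually_gt_atTop 0] with t ht ht0
      rw [pow_one, div_le_div_iff₀ hx ht0] at ht
      linarith
    filter_upwards [hlin, eventually_ge_atTop 0] with t h1 h2
    have hc : Real.exp t / 2 ≤ Real.cosh t := by
      rw [Real.cosh_eq]; nlinarith [Real.exp_pos (-t)]
    have hb : Real.cosh (μ*t) ≤ Real.exp (|μ| * t) := by
      rw [← Real.cosh_abs, abs_mul, abs_of_nonneg h2, Real.cosh_eq]
      have h3 : Real.exp (-(|μ| * t)) ≤ Real.exp (|μ| * t) :=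
        Real.exp_le_exp.2 (neg_le_self (by positivity))
      linarith
    have key : |μ| * t - x * Real.cosh t ≤ -t := by nlinarith
    have hpos : (0:ℝ) ≤ Real.exp (-x * Real.cosh t) * Real.cosh (μ*t) := by positivity
    rw [Real.norm_of_nonneg hpos, Real.norm_of_nonneg (Real.exp_pos _).le, one_mul]
    calc Real.exp (-x * Real.cosh t) * Real.cosh (μ*t)
        ≤ Real.exp (-x * Real.cosh t) * Real.exp (|μ| * t) := by
          exact mul_le_mul_of_nonneg_left hb (Real.exp_pos _).le
      _ = Real.exp (|μ| * t - x * Real.cosh t) := by rw [← Real.exp_add]; ring_nf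
      _ ≤ Real.exp (-1 * t) := Real.exp_le_exp.2 (by linarith)

/-- Turán-type inequality: for `ν ≥ 1` and `x > 0`, `K_{ν-1}(x) K_{ν+1}(x) > K_ν(x)²`. -/
theorem statement19 (ν : ℝ) (hν : 1 ≤ ν) (x : ℝ) (hx : 0 < x) :
    besselK (ν - 1) x * besselK (ν + 1) x > (besselK ν x) ^ 2 := by
  set F : ℝ → ℝ → ℝ := fun a t => Real.exp (-x * Real.cosh t) * Real.cosh (a*t) with hF
  have hFnn : ∀ a t, 0 ≤ F a t := by
    intro a t; rw [hF]; positivity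
  set f : ℝ → ℝ := fun t => Real.sqrt (F (ν-1) t) with hf
  set g : ℝ → ℝ := fun t => Real.sqrt (F (ν+1) t) with hg
  have hf2 : ∀ t, f t ^ 2 = F (ν-1) t := fun t => Real.sq_sqrt (hFnn _ t)
  have hg2 : ∀ t, g t ^ 2 = F (ν+1) t := fun t => Real.sq_sqrt (hFnn _ t)
  have hia : IntegrableOn (F (ν-1)) (Ioi 0) := besselK_integrand_integrable _ hx
  have hib : IntegrableOn (F (ν+1)) (Ioi 0) := besselK_integrand_integrable _ hx
  have hin : IntegrableOn (F ν) (Ioi 0) := besselK_integrand_integrable _ hx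
  have hcontF : ∀ a, Continuous (F a) := fun a => by
    apply Continuous.mul <;> fun_prop
  have hmf : AEStronglyMeasurable f (volume.restrict (Ioi 0)) :=
    ((hcontF (ν-1)).sqrt).aestronglyMeasurable
  have hmg : AEStronglyMeasurable g (volume.restrict (Ioi 0)) :=
    ((hcontF (ν+1)).sqrt).aestronglyMeasurable
  have hLf : MemLp f 2 (volume.restrict (Ioi 0)) :=
    (memLp_two_iff_integrable_sq hmf).2 (by simpa [hf2, IntegrableOn] using hia)
  have hLg : MemLp g 2 (volume.restrict (Ioi 0)) :=
    (memLp_two_iff_integrable_sq hmg).2 (by simpa [hg2, IntegrableOn] using hib)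
  -- pointwise inequality
  have hpoint : ∀ t, F ν t ≤ f t * g t := by
    intro t
    have h1 : f t * g t = Real.exp (-x * Real.cosh t) *
        Real.sqrt (Real.cosh ((ν-1)*t) * Real.cosh ((ν+1)*t)) := by
      rw [hf, hg, hF]
      rw [← Real.sqrt_mul (hFnn (ν-1) t)]
      have : Real.exp (-x * Real.cosh t) * Real.cosh ((ν-1)*t) *
          (Real.exp (-x * Real.cosh t) * Real.cosh ((ν+1)*t)) =
          (Real.exp (-x * Real.cosh t))^2 * (Real.cosh ((ν-1)*t) * Real.cosh ((ν+1)*t)) := by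
        ring
      rw [this, Real.sqrt_mul (sq_nonneg _), Real.sqrt_sq (Real.exp_pos _).le]
    rw [h1, hF]
    apply mul_le_mul_of_nonneg_left _ (Real.exp_pos _).le
    rw [cosh_prod_identity]
    exact Real.le_sqrt_of_sq_le (by nlinarith [sq_nonneg (Real.sinh t)])
  have hstrict : ∀ t ∈ Ioi (0:ℝ), F ν t < f t * g t := by
    intro t ht
    have h1 : f t * g t = Real.exp (-x * Real.cosh t) *
        Real.sqrt (Real.cosh ((ν-1)*t) * Real.cosh ((ν+1)*t)) := by
      rw [hf, hg, hF]
      rw [← Real.sqrt_mul (hFnn (ν-1) t)]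
      have : Real.exp (-x * Real.cosh t) * Real.cosh ((ν-1)*t) *
          (Real.exp (-x * Real.cosh t) * Real.cosh ((ν+1)*t)) =
          (Real.exp (-x * Real.cosh t))^2 * (Real.cosh ((ν-1)*t) * Real.cosh ((ν+1)*t)) := by
        ring
      rw [this, Real.sqrt_mul (sq_nonneg _), Real.sqrt_sq (Real.exp_pos _).le]
    rw [h1, hF]
    apply mul_lt_mul_of_pos_left _ (Real.exp_pos _)
    rw [cosh_prod_identity]
    have hsinh : 0 < Real.sinh t := Real.sinh_pos_iff.2 ht
    exact Real.lt_sqrt_of_sq_lt (by nlinarith)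
  -- integrability of f*g
  have hifg : IntegrableOn (fun t => f t * g t) (Ioi 0) := by
    have hbd : Integrable (fun t => (F (ν-1) t + F (ν+1) t)/2) (volume.restrict (Ioi 0)) :=
      (hia.add hib).div_const 2
    apply Integrable.mono' hbd (hmf.mul hmg)
    filter_upwards with t
    have hfgnn : 0 ≤ f t * g t := mul_nonneg (Real.sqrt_nonneg _) (Real.sqrt_nonneg _)
    have hb : f t * g t ≤ (F (ν-1) t + F (ν+1) t)/2 := by
      nlinarith [sq_nonneg (f t - g t), hf2 t, hg2 t]
    exact le_trans (le_of_eq (Real.norm_of_nonneg hfgnn)) hb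
  -- strict inequality : besselK ν x < ∫ f*g
  have hlt : besselK ν x < ∫ t in Ioi (0:ℝ), f t * g t := by
    have hd : 0 < ∫ t in Ioi (0:ℝ), (f t * g t - F ν t) := by
      refine (setIntegral_pos_iff_support_of_nonneg_ae
        (by filter_upwards with t using sub_nonneg.2 (hpoint t)) (hifg.sub hin)).2 ?_
      have hsub : Ioi (0:ℝ) ⊆
          (Function.support fun t => f t * g t - F ν t) ∩ Ioi 0 := by
        intro t ht
        exact ⟨sub_ne_zero.2 (hstrict t ht).ne', ht⟩
      calc (0:ENNReal) < volume (Ioi (0:ℝ)) := by simp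
        _ ≤ _ := measure_mono hsub
    have := integral_sub hifg hin
    rw [this] at hd
    unfold besselK
    linarith
  -- Cauchy-Schwarz
  have hconj : (2:ℝ).HolderConjugate 2 := by constructor <;> norm_num
  have h2 : ENNReal.ofReal (2:ℝ) = 2 := by norm_num
  have hCS := integral_mul_le_Lp_mul_Lq_of_nonneg hconj
    (f := f) (g := g)
    (Eventually.of_forall fun t => Real.sqrt_nonneg _)
    (Eventually.of_forall fun t => Real.sqrt_nonneg _)
    (h2 ▸ hLf) (h2 ▸ hLg)
  have hrw : ∀ (h : ℝ → ℝ), (fun t => h t ^ (2:ℝ)) = fun t => h t ^ 2 := by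
    intro h; funext t
    rw [← Real.rpow_natCast (h t) 2]; norm_num
  rw [hrw f, hrw g] at hCS
  simp only [hf2, hg2] at hCS
  have hKa : besselK (ν-1) x = ∫ t in Ioi (0:ℝ), F (ν-1) t := rfl
  have hKb : besselK (ν+1) x = ∫ t in Ioi (0:ℝ), F (ν+1) t := rfl
  have hKann : 0 ≤ besselK (ν-1) x := by
    rw [hKa]; exact setIntegral_nonneg measurableSet_Ioi (fun t _ => hFnn _ t)
  have hKbnn : 0 ≤ besselK (ν+1) x := by
    rw [hKb]; exact setIntegral_nonneg measurableSet_Ioi (fun t _ => hFnn _ t)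
  have hKnn : 0 ≤ besselK ν x :=
    setIntegral_nonneg measurableSet_Ioi (fun t _ => by
      have := Real.cosh_pos (ν*t); positivity)
  rw [← hKa, ← hKb] at hCS
  have hsq : ((besselK (ν-1) x) ^ ((1:ℝ)/2) * (besselK (ν+1) x) ^ ((1:ℝ)/2))^2
      = besselK (ν-1) x * besselK (ν+1) x := by
    rw [mul_pow, ← Real.rpow_natCast ((besselK (ν-1) x) ^ ((1:ℝ)/2)) 2,
      ← Real.rpow_natCast ((besselK (ν+1) x) ^ ((1:ℝ)/2)) 2,
      ← Real.rpow_mul hKann, ← Real.rpow_mul hKbnn]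
    norm_num
  have h5 : (besselK ν x)^2 < (∫ t in Ioi (0:ℝ), f t * g t)^2 := by
    apply pow_lt_pow_left₀ hlt hKnn
    norm_num
  calc (besselK ν x)^2 < (∫ t in Ioi (0:ℝ), f t * g t)^2 := h5
    _ ≤ ((besselK (ν-1) x) ^ ((1:ℝ)/2) * (besselK (ν+1) x) ^ ((1:ℝ)/2))^2 := by
        apply pow_le_pow_left₀ (le_trans hKnn hlt.le) hCS
    _ = besselK (ν-1) x * besselK (ν+1) x := hsq
end
end
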